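/- Let Z be a Parisian walk and write ΔZ_i := Z_i − Z_{i−1} for i ≥ 1. Fix t ∈ ℕ and for each t-tuple S = (s_1, …, s_t) ∈ {1, ζ, ζ²}^t define ΔZ_S := ∏_{i : s_i = ζ} ΔZ_i · ∏_{i : s_i = ζ²} conj(ΔZ_i). Then for all S, S′ ∈ {1, ζ, ζ²}^t one has E[ΔZ_S · conj(ΔZ_{S′})] = 1 if S = S′ and E[ΔZ_S · conj(ΔZ_{S′})] = 0 if S ≠ S′. -/

import Mathlib

open MeasureTheory Complex
open scoped Classical

noncomputable section

namespace Parisian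

/-- The primitive cube root of unity `ζ = (−1 + √3·i)/2`. -/
def zeta : ℂ := (-1 + Real.sqrt 3 * Complex.I) / 2

/-- The lattice `ℤ[ζ] = {a + bζ : a, b ∈ ℤ}` as a subset of `ℂ`. -/
def Zlat : Set ℂ := {z | ∃ a b : ℤ, z = (a : ℂ) + (b : ℂ) * zeta}

/-- The set of admissible steps `{1, ζ, ζ²}`. -/
def steps : Set ℂ := {1, zeta, zeta ^ 2}

/-- The set `P = {0, 1, 1 + ζ}`. -/
def Pset : Set ℂ := {0, 1, 1 + zeta}

/-- Graph distance from the set `P` in `ℤ[ζ]`: the least `n` such that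
`z = p + w₁ + ⋯ + w_n` with `p ∈ P` and each `wᵢ ∈ {1, ζ, ζ²}`. -/
def gdist (z : ℂ) : ℕ :=
  sInf {n : ℕ | ∃ p ∈ Pset, ∃ w : Fin n → ℂ, (∀ i, w i ∈ steps) ∧ z = p + ∑ i, w i}

def A1 : Set ℂ := {z | ∃ k1 k2 : ℤ, z = (k1 : ℂ) + (k2 : ℂ) * zeta ^ 2 ∧ 1 < k2 + 1 ∧ k2 + 1 < k1}
def A2 : Set ℂ := {z | ∃ k1 k2 : ℤ, z = -(k1 : ℂ) * zeta - (k2 : ℂ) ∧ 0 ≤ k2 ∧ k2 < k1}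
def A3 : Set ℂ := {z | ∃ k1 k2 : ℤ, z = -(k1 : ℂ) - (k2 : ℂ) * zeta ∧ 0 < k2 ∧ k2 < k1}
def A4 : Set ℂ := {z | ∃ k1 k2 : ℤ, z = (k1 : ℂ) * zeta + (k2 : ℂ) * zeta ^ 2 ∧ 0 ≤ k2 ∧ k2 < k1}
def A5 : Set ℂ := {z | ∃ k1 k2 : ℤ, z = -(k1 : ℂ) * zeta ^ 2 - (k2 : ℂ) ∧ 1 < k2 + 1 ∧ k2 + 1 < k1}
def A6 : Set ℂ := {z | ∃ k1 k2 : ℤ, z = (k1 : ℂ) + (k2 : ℂ) * zeta ∧ 0 < k2 ∧ k2 < k1}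

def B1 : Set ℂ := {z | ∃ n : ℤ, z = (n : ℂ) ∧ 2 ≤ n}
def B2 : Set ℂ := {z | ∃ n : ℤ, z = (n : ℂ) * zeta - zeta ^ 2 ∧ 1 ≤ n}
def B3 : Set ℂ := {z | ∃ n : ℤ, z = (n : ℂ) * zeta ^ 2 ∧ 1 ≤ n}
def B4 : Set ℂ := {z | ∃ n : ℤ, z = (n : ℂ) ∧ n ≤ -1}
def B5 : Set ℂ := {z | ∃ n : ℤ, z = 1 + (n : ℂ) * zeta ∧ n ≤ -1}
def B6 : Set ℂ := {z | ∃ n : ℤ, z = (n : ℂ) * zeta ^ 2 ∧ n ≤ -2}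

/-- The closure `Ā₁ = A₁ ∪ B₁ ∪ B₅ ∪ {1}`. -/
def Abar1 : Set ℂ := A1 ∪ B1 ∪ B5 ∪ {1}
/-- The closure `Ā₃ = A₃ ∪ B₃ ∪ B₄ ∪ {0}`. -/
def Abar3 : Set ℂ := A3 ∪ B3 ∪ B4 ∪ {0}
/-- The closure `Ā₅ = A₅ ∪ B₂ ∪ B₆ ∪ {1+ζ}`. -/
def Abar5 : Set ℂ := A5 ∪ B2 ∪ B6 ∪ {1 + zeta}

/-- `φ(z) = 1_{Ā₁}(z) + ζ·1_{Ā₃}(z) + ζ²·1_{Ā₅}(z)`. -/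
def phi (z : ℂ) : ℂ :=
  Abar1.indicator 1 z + zeta * Abar3.indicator 1 z + zeta ^ 2 * Abar5.indicator 1 z

/-- `ψ(z) = 1_{A₆}(z) + ζ·1_{A₄}(z) + ζ²·1_{A₂}(z)`. -/
def psi (z : ℂ) : ℂ :=
  A6.indicator 1 z + zeta * A4.indicator 1 z + zeta ^ 2 * A2.indicator 1 z

variable {Ω : Type*} {mΩ : MeasurableSpace Ω}

/-- A Parisian walk: an adapted integrable martingale starting in `ℤ[ζ]` a.s.,
with increments in `{1, ζ, ζ²}` a.s. -/
def IsParisian (μ : Measure Ω) (ℱ : Filtration ℕ mΩ) (Z : ℕ → Ω → ℂ) : Prop :=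
  Martingale Z ℱ μ ∧ (∀ᵐ ω ∂μ, Z 0 ω ∈ Zlat) ∧
    ∀ t : ℕ, ∀ᵐ ω ∂μ, Z (t + 1) ω - Z t ω ∈ steps

/-- The local time of a walk: the number of exits from `Ā₁`, `Ā₃`, `Ā₅` before time `t`. -/
def localTime (Z : ℕ → Ω → ℂ) (t : ℕ) (ω : Ω) : ℕ :=
  ∑ u ∈ Finset.range t,
    ((if Z u ω ∈ Abar1 ∧ Z (u + 1) ω ∉ Abar1 then 1 else 0) +
     (if Z u ω ∈ Abar3 ∧ Z (u + 1) ω ∉ Abar3 then 1 else 0) +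
     (if Z u ω ∈ Abar5 ∧ Z (u + 1) ω ∉ Abar5 then 1 else 0))

/-- `ΔZ_S = ∏_{i : sᵢ = ζ} ΔZᵢ · ∏_{i : sᵢ = ζ²} conj(ΔZᵢ)` where `ΔZᵢ = Zᵢ − Z_{i−1}`,
for a tuple `S : Fin t → ℂ` (with entries in `{1, ζ, ζ²}`). -/
def deltaZS (Z : ℕ → Ω → ℂ) (t : ℕ) (S : Fin t → ℂ) (ω : Ω) : ℂ :=
  ∏ i : Fin t,
    (if S i = zeta then Z ((i : ℕ) + 1) ω - Z (i : ℕ) ω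
     else if S i = zeta ^ 2 then starRingEnd ℂ (Z ((i : ℕ) + 1) ω - Z (i : ℕ) ω)
     else 1)

end Parisian

namespace Parisian


-- ===== auxiliary lemmas =====
section Aux


lemma zeta_re : zeta.re = -(1/2) := by simp [zeta]; norm_num
lemma zeta_im : zeta.im = Real.sqrt 3 / 2 := by simp [zeta]

lemma sqrt3_pos : (0:ℝ) < Real.sqrt 3 := Real.sqrt_pos.mpr (by norm_num)

lemma normSq_zeta : Complex.normSq zeta = 1 := by
  have h3 : Real.sqrt 3 ^ 2 = 3 := Real.sq_sqrt (by norm_num)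
  simp only [Complex.normSq_apply, zeta_re, zeta_im]
  nlinarith [h3]

lemma zeta_mul_conj : zeta * starRingEnd ℂ zeta = 1 := by
  rw [Complex.mul_conj, normSq_zeta]; norm_num

lemma conj_zeta : starRingEnd ℂ zeta = zeta ^ 2 := by
  apply Complex.ext <;>
    simp only [Complex.conj_re, Complex.conj_im, pow_two, Complex.mul_re, Complex.mul_im,
      zeta_re, zeta_im] <;>
    nlinarith [Real.sq_sqrt (show (0:ℝ) ≤ 3 by norm_num), Real.sqrt_nonneg 3]

lemma zeta_cube : zeta ^ 3 = 1 := by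
  have := zeta_mul_conj
  rw [conj_zeta] at this
  calc zeta ^ 3 = zeta * zeta ^ 2 := by ring
  _ = 1 := this

lemma zeta_im_sq : (zeta ^ 2).im = -(Real.sqrt 3 / 2) := by
  rw [← conj_zeta]; simp [zeta_im]

lemma zeta_ne_one : zeta ≠ 1 := by
  intro h
  have := congrArg Complex.im h
  rw [zeta_im] at this
  simp at this

lemma zeta_sq_ne_one : zeta ^ 2 ≠ 1 := by
  intro h
  have := congrArg Complex.im h
  rw [zeta_im_sq] at this
  simp at this

lemma zeta_ne_sq : zeta ≠ zeta ^ 2 := by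
  intro h
  have := congrArg Complex.im h
  rw [zeta_im, zeta_im_sq] at this
  linarith [sqrt3_pos]

lemma conj_zeta_sq : starRingEnd ℂ (zeta ^ 2) = zeta := by
  rw [← conj_zeta, Complex.conj_conj]

lemma conj_step {w : ℂ} (hw : w ∈ steps) : starRingEnd ℂ w = w ^ 2 := by
  rcases hw with h | h | h
  · simp [h]
  · rw [h, conj_zeta]
  · rw [h, conj_zeta_sq]
    calc zeta = zeta * 1 := by ring
    _ = zeta * zeta ^ 3 := by rw [zeta_cube]
    _ = (zeta ^ 2) ^ 2 := by ring

lemma step_mul_conj {w : ℂ} (hw : w ∈ steps) : w * starRingEnd ℂ w = 1 := by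
  rcases hw with h | h | h
  · simp [h]
  · rw [h]; exact zeta_mul_conj
  · rw [h, conj_zeta_sq]
    calc zeta ^ 2 * zeta = zeta ^ 3 := by ring
    _ = 1 := zeta_cube

lemma norm_step {w : ℂ} (hw : w ∈ steps) : ‖w‖ = 1 := by
  have := step_mul_conj hw
  rw [Complex.mul_conj] at this
  have h2 : Complex.normSq w = 1 := by
    have := congrArg Complex.re this; simpa using this
  rw [Complex.norm_def, h2, Real.sqrt_one]



/-- The step map: `G s w` is `w` if `s = ζ`, `conj w` if `s = ζ²`, and `1` otherwise. -/
def G (s w : ℂ) : ℂ := if s = zeta then w else if s = zeta ^ 2 then starRingEnd ℂ w else 1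

lemma one_mem_steps : (1 : ℂ) ∈ steps := Or.inl rfl

lemma G_one_val (w : ℂ) : G 1 w = 1 := by
  rw [G, if_neg (fun h => zeta_ne_one h.symm), if_neg (fun h => zeta_sq_ne_one h.symm)]

lemma G_zeta_val (w : ℂ) : G zeta w = w := if_pos rfl

lemma G_zeta_sq_val (w : ℂ) : G (zeta ^ 2) w = starRingEnd ℂ w := by
  rw [G, if_neg (fun h => zeta_ne_sq h.symm), if_pos rfl]

lemma mul_self_step {w : ℂ} (hw : w ∈ steps) : w * w = starRingEnd ℂ w := by
  rw [conj_step hw]; ring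

lemma conj_mul_self_step {w : ℂ} (hw : w ∈ steps) :
    starRingEnd ℂ w * starRingEnd ℂ w = w := by
  rw [← map_mul, mul_self_step hw, Complex.conj_conj]

lemma G_mul_conj_self (s : ℂ) {w : ℂ} (hw : w ∈ steps) :
    G s w * starRingEnd ℂ (G s w) = 1 := by
  by_cases h1 : s = zeta
  · rw [h1, G_zeta_val]; exact step_mul_conj hw
  by_cases h2 : s = zeta ^ 2
  · rw [h2, G_zeta_sq_val, Complex.conj_conj, mul_comm]; exact step_mul_conj hw
  · rw [G, if_neg h1, if_neg h2]; simp

lemma G_offdiag {s s' : ℂ} (hs : s ∈ steps) (hs' : s' ∈ steps) (hne : s ≠ s') :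
    (∀ w ∈ steps, G s w * starRingEnd ℂ (G s' w) = w) ∨
    (∀ w ∈ steps, G s w * starRingEnd ℂ (G s' w) = starRingEnd ℂ w) := by
  rcases hs with rfl | rfl | rfl <;> rcases hs' with rfl | rfl | rfl
  · exact absurd rfl hne
  · -- s = 1, s' = ζ
    right; intro w hw; rw [G_one_val, G_zeta_val, one_mul]
  · -- s = 1, s' = ζ²
    left; intro w hw; rw [G_one_val, G_zeta_sq_val, Complex.conj_conj, one_mul]
  · -- s = ζ, s' = 1
    left; intro w hw; rw [G_zeta_val, G_one_val]; simp
  · exact absurd rfl hne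
  · -- s = ζ, s' = ζ²
    right; intro w hw; rw [G_zeta_val, G_zeta_sq_val, Complex.conj_conj, mul_self_step hw]
  · -- s = ζ², s' = 1
    right; intro w hw; rw [G_zeta_sq_val, G_one_val]; simp
  · -- s = ζ², s' = ζ
    left; intro w hw; rw [G_zeta_sq_val, G_zeta_val, conj_mul_self_step hw]
  · exact absurd rfl hne

lemma norm_G (s : ℂ) {w : ℂ} (hw : w ∈ steps) : ‖G s w‖ = 1 := by
  unfold G
  split_ifs
  · exact norm_step hw
  · rw [RCLike.norm_conj]; exact norm_step hw
  · simp

lemma stronglyMeasurable_G {m : MeasurableSpace Ω} (s : ℂ) {f : Ω → ℂ}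
    (hf : StronglyMeasurable[m] f) : StronglyMeasurable[m] fun ω => G s (f ω) := by
  unfold G
  split_ifs
  · exact hf
  · exact Complex.continuous_conj.comp_stronglyMeasurable hf
  · exact stronglyMeasurable_const



variable {Ω : Type*} {mΩ : MeasurableSpace Ω} {μ : Measure Ω} {ℱ : Filtration ℕ mΩ}

lemma condexp_clm [IsFiniteMeasure μ] (i : ℕ)
    {E F : Type*} [NormedAddCommGroup E] [NormedSpace ℝ E] [CompleteSpace E]
    [NormedAddCommGroup F] [NormedSpace ℝ F] [CompleteSpace F]
    (T : E →L[ℝ] F) {f : Ω → E} (hf : Integrable f μ) :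
    μ[fun ω => T (f ω)|ℱ i] =ᵐ[μ] fun ω => T ((μ[f|ℱ i]) ω) := by
  refine (ae_eq_condExp_of_forall_setIntegral_eq (ℱ.le i) (T.integrable_comp hf)
    (fun s _ _ => (T.integrable_comp integrable_condExp).integrableOn)
    (fun s hs hμs => ?_)
    (T.continuous.comp_stronglyMeasurable stronglyMeasurable_condExp).aestronglyMeasurable).symm
  rw [T.integral_comp_comm integrable_condExp.integrableOn,
    setIntegral_condExp (ℱ.le i) hf hs, ← T.integral_comp_comm hf.integrableOn]

lemma comp_condexp_zero [IsFiniteMeasure μ] (i : ℕ)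
    {F : Type*} [NormedAddCommGroup F] [NormedSpace ℝ F] [CompleteSpace F]
    (T : ℂ →L[ℝ] F) {f : Ω → ℂ} (hf : Integrable f μ) (h0 : μ[f|ℱ i] =ᵐ[μ] 0) :
    μ[fun ω => T (f ω)|ℱ i] =ᵐ[μ] 0 := by
  refine (condexp_clm i T hf).trans ?_
  filter_upwards [h0] with ω hω
  simp only [Pi.zero_apply] at hω ⊢
  simp [hω]

lemma real_pull [IsFiniteMeasure μ] (i : ℕ)
    {Y X : Ω → ℝ} (hY : StronglyMeasurable[ℱ i] Y)
    (hYX : Integrable (fun ω => Y ω * X ω) μ) (hX : Integrable X μ)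
    (hX0 : μ[X|ℱ i] =ᵐ[μ] 0) : ∫ ω, Y ω * X ω ∂μ = 0 := by
  have h1 : μ[fun ω => Y ω * X ω|ℱ i] =ᵐ[μ] fun ω => Y ω * (μ[X|ℱ i]) ω :=
    condExp_mul_of_stronglyMeasurable_left hY hYX hX
  have h2 : μ[fun ω => Y ω * X ω|ℱ i] =ᵐ[μ] 0 := by
    refine h1.trans ?_
    filter_upwards [hX0] with ω hω
    simp only [Pi.zero_apply] at hω ⊢
    simp [hω]
  rw [← integral_condExp (ℱ.le i), integral_congr_ae h2]
  simp

lemma integral_mul_eq_zero [IsProbabilityMeasure μ] (i : ℕ)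
    {Y X : Ω → ℂ} (hY : StronglyMeasurable[ℱ i] Y) (hYb : ∀ᵐ ω ∂μ, ‖Y ω‖ ≤ 1)
    (hXm : AEStronglyMeasurable X μ) (hXb : ∀ᵐ ω ∂μ, ‖X ω‖ ≤ 1)
    (hX0 : μ[X|ℱ i] =ᵐ[μ] 0) : ∫ ω, Y ω * X ω ∂μ = 0 := by
  have hX : Integrable X μ := (integrable_const (1:ℝ)).mono' hXm (by
    filter_upwards [hXb] with ω h; simpa using h)
  have hprodInt : ∀ T T' : ℂ →L[ℝ] ℝ, (∀ z, ‖T z‖ ≤ ‖z‖) → (∀ z, ‖T' z‖ ≤ ‖z‖) →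
      Integrable (fun ω => T (Y ω) * T' (X ω)) μ := by
    intro T T' hT hT'
    have hYT : StronglyMeasurable[ℱ i] fun ω => T (Y ω) :=
      T.continuous.comp_stronglyMeasurable hY
    have hX'm : AEStronglyMeasurable (fun ω => T' (X ω)) μ :=
      T'.continuous.comp_aestronglyMeasurable hXm
    refine (integrable_const (1:ℝ)).mono' (((hYT.mono (ℱ.le i)).aestronglyMeasurable).mul hX'm) ?_
    filter_upwards [hXb, hYb] with ω h h2
    calc ‖T (Y ω) * T' (X ω)‖ = ‖T (Y ω)‖ * ‖T' (X ω)‖ := norm_mul _ _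
    _ ≤ 1 * 1 :=
        mul_le_mul (le_trans (hT _) h2) (le_trans (hT' _) h) (norm_nonneg _) zero_le_one
    _ = 1 := by norm_num
  have key : ∀ T T' : ℂ →L[ℝ] ℝ, (∀ z, ‖T z‖ ≤ ‖z‖) → (∀ z, ‖T' z‖ ≤ ‖z‖) →
      ∫ ω, T (Y ω) * T' (X ω) ∂μ = 0 := by
    intro T T' hT hT'
    have hYT : StronglyMeasurable[ℱ i] fun ω => T (Y ω) :=
      T.continuous.comp_stronglyMeasurable hY
    have hX'm : AEStronglyMeasurable (fun ω => T' (X ω)) μ :=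
      T'.continuous.comp_aestronglyMeasurable hXm
    have hX' : Integrable (fun ω => T' (X ω)) μ :=
      (integrable_const (1:ℝ)).mono' hX'm (by
        filter_upwards [hXb] with ω h
        exact le_trans (hT' _) h)
    have hprod : Integrable (fun ω => T (Y ω) * T' (X ω)) μ := hprodInt T T' hT hT'
    exact real_pull i hYT hprod hX' (comp_condexp_zero i T' hX hX0)
  have hYX : Integrable (fun ω => Y ω * X ω) μ := by
    refine (integrable_const (1:ℝ)).mono' (((hY.mono (ℱ.le i)).aestronglyMeasurable).mul hXm) ?_
    filter_upwards [hXb, hYb] with ω h h2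
    calc ‖Y ω * X ω‖ = ‖Y ω‖ * ‖X ω‖ := norm_mul _ _
    _ ≤ 1 * 1 := mul_le_mul h2 h (norm_nonneg _) zero_le_one
    _ = 1 := by norm_num
  have habs : ∀ z : ℂ, ‖Complex.reCLM z‖ ≤ ‖z‖ ∧ ‖Complex.imCLM z‖ ≤ ‖z‖ := by
    intro z
    constructor
    · simpa using Complex.abs_re_le_norm z
    · simpa using Complex.abs_im_le_norm z
  have hre : (∫ ω, Y ω * X ω ∂μ).re = 0 := by
    rw [← RCLike.re_to_complex, ← integral_re hYX]
    simp only [RCLike.re_to_complex]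
    have hpt : (fun ω => (Y ω * X ω).re)
        = fun ω => (Y ω).re * (X ω).re - (Y ω).im * (X ω).im := by
      funext ω; exact Complex.mul_re _ _
    rw [hpt]
    have h1 := key Complex.reCLM Complex.reCLM (fun z => (habs z).1) (fun z => (habs z).1)
    have h2 := key Complex.imCLM Complex.imCLM (fun z => (habs z).2) (fun z => (habs z).2)
    have hi1 := hprodInt Complex.reCLM Complex.reCLM (fun z => (habs z).1) (fun z => (habs z).1)
    have hi2 := hprodInt Complex.imCLM Complex.imCLM (fun z => (habs z).2) (fun z => (habs z).2)
    simp only [Complex.reCLM_apply, Complex.imCLM_apply] at h1 h2 hi1 hi2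
    rw [integral_sub hi1 hi2, h1, h2, sub_zero]
  have him : (∫ ω, Y ω * X ω ∂μ).im = 0 := by
    rw [← RCLike.im_to_complex, ← integral_im hYX]
    simp only [RCLike.im_to_complex]
    have hpt : (fun ω => (Y ω * X ω).im)
        = fun ω => (Y ω).re * (X ω).im + (Y ω).im * (X ω).re := by
      funext ω; exact Complex.mul_im _ _
    rw [hpt]
    have h1 := key Complex.reCLM Complex.imCLM (fun z => (habs z).1) (fun z => (habs z).2)
    have h2 := key Complex.imCLM Complex.reCLM (fun z => (habs z).2) (fun z => (habs z).1)
    have hi1 := hprodInt Complex.reCLM Complex.imCLM (fun z => (habs z).1) (fun z => (habs z).2)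
    have hi2 := hprodInt Complex.imCLM Complex.reCLM (fun z => (habs z).2) (fun z => (habs z).1)
    simp only [Complex.reCLM_apply, Complex.imCLM_apply] at h1 h2 hi1 hi2
    rw [integral_add hi1 hi2, h1, h2, add_zero]
  exact Complex.ext (by simpa using hre) (by simpa using him)


lemma condexp_diff_zero {μ : Measure Ω} [IsFiniteMeasure μ] {ℱ : Filtration ℕ mΩ}
    {Z : ℕ → Ω → ℂ} (hM : Martingale Z ℱ μ) (i : ℕ) :
    μ[fun ω => Z (i + 1) ω - Z i ω|ℱ i] =ᵐ[μ] 0 := by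
  have h3 : μ[fun ω => Z (i + 1) ω - Z i ω|ℱ i] =ᵐ[μ] μ[Z (i+1)|ℱ i] - μ[Z i|ℱ i] :=
    condExp_sub (hM.integrable (i+1)) (hM.integrable i) _
  refine h3.trans ?_
  filter_upwards [hM.condExp_ae_eq (Nat.le_succ i), hM.condExp_ae_eq (le_refl i)] with ω e1 e2
  simp [Pi.sub_apply, e1, e2]

lemma condexp_conj_diff_zero {μ : Measure Ω} [IsFiniteMeasure μ] {ℱ : Filtration ℕ mΩ}
    {Z : ℕ → Ω → ℂ} (hM : Martingale Z ℱ μ) (i : ℕ) :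
    μ[fun ω => starRingEnd ℂ (Z (i + 1) ω - Z i ω)|ℱ i] =ᵐ[μ] 0 := by
  have := comp_condexp_zero (μ := μ) (ℱ := ℱ) i Complex.conjCLE.toContinuousLinearMap
    ((hM.integrable (i+1)).sub (hM.integrable i)) (condexp_diff_zero hM i)
  refine Filter.EventuallyEq.trans (condExp_congr_ae ?_) this
  filter_upwards with ω
  simp [Complex.conjCLE_apply]

end Aux

/-- Orthonormality of the family `{ΔZ_S : S ∈ {1, ζ, ζ²}^t}`:
`E[ΔZ_S · conj(ΔZ_{S'})] = 1` if `S = S'` and `= 0` otherwise. -/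
theorem deltaZS_orthonormal
    {Ω : Type*} {mΩ : MeasurableSpace Ω} (μ : Measure Ω) [IsProbabilityMeasure μ]
    (ℱ : Filtration ℕ mΩ) (Z : ℕ → Ω → ℂ) (hZ : IsParisian μ ℱ Z)
    (t : ℕ) (S S' : Fin t → ℂ) (hS : ∀ i, S i ∈ steps) (hS' : ∀ i, S' i ∈ steps) :
    ∫ ω, deltaZS Z t S ω * starRingEnd ℂ (deltaZS Z t S' ω) ∂μ
      = if S = S' then 1 else 0 := by
  classical
  obtain ⟨hmart, -, hsteps⟩ := hZ
  set T : ℕ → ℂ := fun i => if h : i < t then S ⟨i, h⟩ else 1 with hTdef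
  set T' : ℕ → ℂ := fun i => if h : i < t then S' ⟨i, h⟩ else 1 with hT'def
  have hT : ∀ i, T i ∈ steps := by
    intro i; by_cases h : i < t
    · simp only [hTdef, dif_pos h]; exact hS ⟨i, h⟩
    · simp only [hTdef, dif_neg h]; exact one_mem_steps
  have hT' : ∀ i, T' i ∈ steps := by
    intro i; by_cases h : i < t
    · simp only [hT'def, dif_pos h]; exact hS' ⟨i, h⟩
    · simp only [hT'def, dif_neg h]; exact one_mem_steps
  set g : ℕ → Ω → ℂ := fun i ω =>
    G (T i) (Z (i+1) ω - Z i ω) * starRingEnd ℂ (G (T' i) (Z (i+1) ω - Z i ω)) with hgdef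
  have hae : ∀ᵐ ω ∂μ, ∀ i, Z (i+1) ω - Z i ω ∈ steps := ae_all_iff.mpr hsteps
  have hZSM : ∀ j n, j ≤ n → StronglyMeasurable[ℱ n] (Z j) :=
    fun j n h => (hmart.stronglyAdapted j).mono (ℱ.mono h)
  have hgSM : ∀ i n, i < n → StronglyMeasurable[ℱ n] (g i) := by
    intro i n h
    have hΔ : StronglyMeasurable[ℱ n] (fun ω => Z (i+1) ω - Z i ω) :=
      (hZSM (i+1) n h).sub (hZSM i n (le_of_lt h))
    exact (stronglyMeasurable_G _ hΔ).mul
      (Complex.continuous_conj.comp_stronglyMeasurable (stronglyMeasurable_G _ hΔ))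
  have hprodSM : ∀ n, StronglyMeasurable[ℱ n] (fun ω => ∏ i ∈ Finset.range n, g i ω) := by
    intro n
    apply Finset.stronglyMeasurable_fun_prod
    intro i hi
    exact hgSM i n (Finset.mem_range.mp hi)
  have hgnorm : ∀ᵐ ω ∂μ, ∀ i, ‖g i ω‖ = 1 := by
    filter_upwards [hae] with ω h i
    simp only [hgdef]
    rw [norm_mul, norm_G _ (h i), RCLike.norm_conj, norm_G _ (h i), one_mul]
  have hprodbd : ∀ n, ∀ᵐ ω ∂μ, ‖∏ i ∈ Finset.range n, g i ω‖ ≤ 1 := by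
    intro n
    filter_upwards [hgnorm] with ω h
    rw [norm_prod]
    refine le_of_eq ?_
    calc ∏ i ∈ Finset.range n, ‖g i ω‖ = ∏ _i ∈ Finset.range n, (1:ℝ) :=
          Finset.prod_congr rfl (fun i _ => h i)
    _ = 1 := Finset.prod_const_one
  have hgbd : ∀ n, ∀ᵐ ω ∂μ, ‖g n ω‖ ≤ 1 := fun n => by
    filter_upwards [hgnorm] with ω h; exact le_of_eq (h n)
  have hcond0 : ∀ n, T n ≠ T' n → μ[g n|ℱ n] =ᵐ[μ] 0 := by
    intro n hn
    rcases G_offdiag (hT n) (hT' n) hn with h | h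
    · refine (condExp_congr_ae ?_).trans (condexp_diff_zero hmart n)
      filter_upwards [hsteps n] with ω hw
      exact h _ hw
    · refine (condExp_congr_ae ?_).trans (condexp_conj_diff_zero hmart n)
      filter_upwards [hsteps n] with ω hw
      exact h _ hw
  have main : ∀ n, ∫ ω, ∏ i ∈ Finset.range n, g i ω ∂μ
      = if ∀ i < n, T i = T' i then 1 else 0 := by
    intro n
    induction n with
    | zero => simp
    | succ n ih =>
      by_cases hn : T n = T' n
      · have heq : (fun ω => ∏ i ∈ Finset.range (n+1), g i ω)
            =ᵐ[μ] fun ω => ∏ i ∈ Finset.range n, g i ω := by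
          filter_upwards [hae] with ω h
          rw [Finset.prod_range_succ, show g n ω = 1 from ?_, mul_one]
          simp only [hgdef]
          rw [hn]
          exact G_mul_conj_self _ (h n)
        rw [integral_congr_ae heq, ih]
        refine if_congr ?_ rfl rfl
        constructor
        · intro H i hi
          rcases Nat.lt_succ_iff_lt_or_eq.mp hi with h' | rfl
          · exact H i h'
          · exact hn
        · intro H i hi; exact H i (hi.trans n.lt_succ_self)
      · rw [if_neg (fun H => hn (H n n.lt_succ_self))]
        have heq : (fun ω => ∏ i ∈ Finset.range (n+1), g i ω)
            = fun ω => (∏ i ∈ Finset.range n, g i ω) * g n ω :=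
          funext fun ω => Finset.prod_range_succ _ _
        rw [heq]
        refine integral_mul_eq_zero n (hprodSM n) (hprodbd n) ?_ (hgbd n) (hcond0 n hn)
        exact ((hgSM n (n+1) n.lt_succ_self).mono (ℱ.le _)).aestronglyMeasurable
  have hpt : ∀ ω, deltaZS Z t S ω * starRingEnd ℂ (deltaZS Z t S' ω)
      = ∏ i ∈ Finset.range t, g i ω := by
    intro ω
    simp only [deltaZS]
    rw [map_prod, ← Finset.prod_mul_distrib, ← Fin.prod_univ_eq_prod_range (fun i => g i ω) t]
    refine Finset.prod_congr rfl fun i _ => ?_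
    have h1 : T (i : ℕ) = S i := by simp [hTdef, i.isLt]
    have h2 : T' (i : ℕ) = S' i := by simp [hT'def, i.isLt]
    simp only [hgdef]
    rw [h1, h2]
    rfl
  rw [integral_congr_ae (Filter.Eventually.of_forall hpt), main t]
  refine if_congr ?_ rfl rfl
  constructor
  · intro H
    funext i
    have h := H i.1 i.isLt
    simp only [hTdef, hT'def, dif_pos i.isLt] at h
    simpa using h
  · intro h i hi
    simp [hTdef, hT'def, dif_pos hi, h]

end Parisian
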